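/- Let S be a commutative unital ring whose additive group is torsion-free (for example S = ℤ or S = ℤ_p), and let p be a prime that is not invertible in S. If there exist groups B and C with B finite such that the p-reduced Heisenberg group Hr_p(S) is isomorphic as a group to the direct product B × C, then B is the trivial group. -/

import Mathlib

/-- The Heisenberg group over a commutative unital ring `S`: the underlying set is
`S × S × S` with multiplication `(x,y,z)·(x',y',z') = (x+x', y+y', z+xy'+z')`. -/
@[ext]
structure Heis (S : Type*) [CommRing S] where
  x : S
  y : S
  z : S

namespace Heis

variable {S : Type*} [CommRing S]

instance : Mul (Heis S) := ⟨fun a b => ⟨a.x + b.x, a.y + b.y, a.z + a.x * b.y + b.z⟩⟩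
instance : One (Heis S) := ⟨⟨0, 0, 0⟩⟩
instance : Inv (Heis S) := ⟨fun a => ⟨-a.x, -a.y, a.x * a.y - a.z⟩⟩

@[simp] lemma mul_x (a b : Heis S) : (a * b).x = a.x + b.x := rfl
@[simp] lemma mul_y (a b : Heis S) : (a * b).y = a.y + b.y := rfl
@[simp] lemma mul_z (a b : Heis S) : (a * b).z = a.z + a.x * b.y + b.z := rfl
@[simp] lemma one_x : (1 : Heis S).x = 0 := rfl
@[simp] lemma one_y : (1 : Heis S).y = 0 := rfl
@[simp] lemma one_z : (1 : Heis S).z = 0 := rfl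
@[simp] lemma inv_x (a : Heis S) : a⁻¹.x = -a.x := rfl
@[simp] lemma inv_y (a : Heis S) : a⁻¹.y = -a.y := rfl
@[simp] lemma inv_z (a : Heis S) : a⁻¹.z = a.x * a.y - a.z := rfl

instance : Group (Heis S) where
  mul_assoc a b c := by ext <;> simp <;> ring
  one_mul a := by ext <;> simp
  mul_one a := by ext <;> simp
  inv_mul_cancel a := by ext <;> simp <;> ring

end Heis

/-- The central subgroup `{(0,0,ps) : s ∈ S}` of the Heisenberg group `H(S)`. -/
def pCenter (p : ℕ) (S : Type*) [CommRing S] : Subgroup (Heis S) where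
  carrier := {a | a.x = 0 ∧ a.y = 0 ∧ ∃ s : S, a.z = p * s}
  mul_mem' := by
    rintro a b ⟨hax, hay, s, hs⟩ ⟨hbx, hby, t, ht⟩
    refine ⟨by rw [Heis.mul_x, hax, hbx, add_zero],
      by rw [Heis.mul_y, hay, hby, add_zero], s + t, ?_⟩
    rw [Heis.mul_z, hs, ht, hax]; ring
  one_mem' := ⟨rfl, rfl, 0, by simp⟩
  inv_mem' := by
    rintro a ⟨hax, hay, s, hs⟩
    exact ⟨by rw [Heis.inv_x, hax, neg_zero], by rw [Heis.inv_y, hay, neg_zero],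
      -s, by rw [Heis.inv_z, hax, hs]; ring⟩

instance pCenter.normal (p : ℕ) (S : Type*) [CommRing S] : (pCenter p S).Normal := by
  constructor
  intro n hn g
  obtain ⟨hx, hy, hz⟩ := hn
  have hgn : g * n * g⁻¹ = n := by ext <;> simp [hx, hy] <;> ring
  rw [hgn]; exact ⟨hx, hy, hz⟩

/-- The `p`-reduced Heisenberg group over `S`: the quotient of `H(S)` by the central
subgroup `{(0,0,ps) : s ∈ S}`. -/
abbrev HrP (p : ℕ) (S : Type*) [CommRing S] : Type _ := Heis S ⧸ pCenter p S

/-- The subgroup `{(0,0,s) : s ∈ S}` of `H(S)`. -/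
def zSubgroup (S : Type*) [CommRing S] : Subgroup (Heis S) where
  carrier := {a | a.x = 0 ∧ a.y = 0}
  mul_mem' := by
    rintro a b ⟨hax, hay⟩ ⟨hbx, hby⟩
    exact ⟨by rw [Heis.mul_x, hax, hbx, add_zero], by rw [Heis.mul_y, hay, hby, add_zero]⟩
  one_mem' := ⟨rfl, rfl⟩
  inv_mem' := by
    rintro a ⟨hax, hay⟩
    exact ⟨by rw [Heis.inv_x, hax, neg_zero], by rw [Heis.inv_y, hay, neg_zero]⟩

/-- The subgroup `K = {(0,0,[s]) : s ∈ S}` of the `p`-reduced Heisenberg group `Hr_p(S)`. -/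
def Ksub (p : ℕ) (S : Type*) [CommRing S] : Subgroup (HrP p S) :=
  (zSubgroup S).map (QuotientGroup.mk' (pCenter p S))

instance Ksub.normal (p : ℕ) (S : Type*) [CommRing S] : (Ksub p S).Normal := by
  constructor
  intro n hn g
  obtain ⟨a, ⟨hax, hay⟩, rfl⟩ := hn
  obtain ⟨b, rfl⟩ := QuotientGroup.mk'_surjective (pCenter p S) g
  refine ⟨b * a * b⁻¹, ⟨?_, ?_⟩, by simp⟩
  · simp [hax]
  · simp [hay]

lemma Heis.pow_x' {S : Type*} [CommRing S] (a : Heis S) (n : ℕ) : (a ^ n).x = n • a.x := by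
  induction n with
  | zero => simp
  | succ n ih => rw [pow_succ, succ_nsmul]; simp [ih]

lemma Heis.pow_y' {S : Type*} [CommRing S] (a : Heis S) (n : ℕ) : (a ^ n).y = n • a.y := by
  induction n with
  | zero => simp
  | succ n ih => rw [pow_succ, succ_nsmul]; simp [ih]

/-- An element `(0,0,s)` is central in the Heisenberg group. -/
lemma Heis.central {S : Type*} [CommRing S] (s : S) (c : Heis S) :
    (⟨0, 0, s⟩ : Heis S) * c = c * ⟨0, 0, s⟩ := by
  ext <;> simp <;> ring

open scoped commutatorElement

/-- `(0,0,s)` is a commutator in the Heisenberg group. -/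
lemma Heis.comm_elt {S : Type*} [CommRing S] (s : S) :
    (⟨0, 0, s⟩ : Heis S) = ⁅(⟨1, 0, 0⟩ : Heis S), (⟨0, s, 0⟩ : Heis S)⁆ := by
  rw [commutatorElement_def]
  ext <;> simp <;> ring

/-- Let `S` be a commutative unital ring whose additive group is torsion-free,
and `p` a prime not invertible in `S`.  If `Hr_p(S) ≅ B × C` with `B` finite, then `B` is
trivial. -/
theorem HrP_not_finite_times_anything
    (p : ℕ) (hp : p.Prime) (S : Type*) [CommRing S]
    (hS : ∀ g : S, g ≠ 0 → ¬IsOfFinAddOrder g) (hpS : ¬ IsUnit (p : S))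
    (B C : Type*) [Group B] [Group C] [Finite B]
    (e : HrP p S ≃* B × C) :
    Subsingleton B := by
  -- Every element of the form `e.symm (b, 1)` is the class of `(0,0,s)` for some `s`.
  have key : ∀ b : B, ∃ s : S,
      e.symm (b, 1) = QuotientGroup.mk (s := pCenter p S) ⟨0, 0, s⟩ := by
    intro b
    obtain ⟨a, ha⟩ := QuotientGroup.mk'_surjective (pCenter p S) (e.symm (b, 1))
    have hn : 0 < orderOf b := orderOf_pos b
    have hgn : (QuotientGroup.mk a : HrP p S) ^ orderOf b = 1 := by
      rw [show (QuotientGroup.mk a : HrP p S) = QuotientGroup.mk' (pCenter p S) a from rfl,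
        ha, ← map_pow]
      have : ((b, (1 : C)) : B × C) ^ orderOf b = 1 := by
        rw [Prod.pow_def, pow_orderOf_eq_one, one_pow]; rfl
      rw [this, map_one]
    rw [show ((1 : HrP p S)) = QuotientGroup.mk (s := pCenter p S) 1 from rfl,
      ← QuotientGroup.mk_pow, QuotientGroup.eq] at hgn
    obtain ⟨hx, hy, _⟩ := hgn
    simp only [Heis.mul_x, Heis.mul_y, Heis.one_x, Heis.one_y, Heis.inv_x, Heis.inv_y,
      Heis.pow_x', Heis.pow_y'] at hx hy
    have hx' : orderOf b • a.x = 0 := by simpa using hx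
    have hy' : orderOf b • a.y = 0 := by simpa using hy
    have hax : a.x = 0 := by
      by_contra h
      exact hS a.x h (isOfFinAddOrder_iff_nsmul_eq_zero.mpr ⟨orderOf b, hn, hx'⟩)
    have hay : a.y = 0 := by
      by_contra h
      exact hS a.y h (isOfFinAddOrder_iff_nsmul_eq_zero.mpr ⟨orderOf b, hn, hy'⟩)
    have haeq : a = ⟨0, 0, a.z⟩ := by ext <;> simp [hax, hay]
    exact ⟨a.z, by rw [← ha, haeq]; rfl⟩
  -- such classes are central in `HrP p S`
  have central : ∀ s : S, ∀ g : HrP p S,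
      (QuotientGroup.mk (s := pCenter p S) ⟨0, 0, s⟩) * g
        = g * QuotientGroup.mk (s := pCenter p S) ⟨0, 0, s⟩ := by
    intro s g
    obtain ⟨c, rfl⟩ := QuotientGroup.mk'_surjective (pCenter p S) g
    exact congrArg QuotientGroup.mk (Heis.central s c)
  -- hence `B` is commutative
  have hcomm : ∀ b1 b2 : B, b1 * b2 = b2 * b1 := by
    intro b1 b2
    obtain ⟨s1, hs1⟩ := key b1
    obtain ⟨s2, hs2⟩ := key b2
    have : e.symm (b1, 1) * e.symm (b2, 1) = e.symm (b2, 1) * e.symm (b1, 1) := by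
      rw [hs1, hs2]; exact central s1 _
    rw [← map_mul, ← map_mul] at this
    have := e.symm.injective this
    exact (Prod.ext_iff.mp this).1
  -- every `b` is a commutator in `B`, hence trivial by commutativity
  refine subsingleton_of_forall_eq 1 fun b => ?_
  obtain ⟨s, hs⟩ := key b
  have hcom : e.symm (b, 1) =
      ⁅(QuotientGroup.mk (s := pCenter p S) ⟨1, 0, 0⟩ : HrP p S),
       (QuotientGroup.mk (s := pCenter p S) ⟨0, s, 0⟩ : HrP p S)⁆ := by
    rw [hs]
    rw [commutatorElement_def]
    show QuotientGroup.mk _ = QuotientGroup.mk _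
    congr 1
    rw [Heis.comm_elt s, commutatorElement_def]
  have : (b, (1 : C)) = ⁅e (QuotientGroup.mk ⟨1, 0, 0⟩), e (QuotientGroup.mk ⟨0, s, 0⟩)⁆ := by
    rw [← map_commutatorElement, ← hcom, MulEquiv.apply_symm_apply]
  have hb : b = ⁅(e (QuotientGroup.mk ⟨1, 0, 0⟩)).1, (e (QuotientGroup.mk ⟨0, s, 0⟩)).1⁆ := by
    have := (Prod.ext_iff.mp this).1
    simpa [commutatorElement_def] using this
  rw [hb]
  exact commutatorElement_eq_one_iff_commute.mpr (hcomm _ _)
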